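/- For every real T > 0 there exist a natural number n ≥ 1 and a real β₀ with 0 < β₀ < T such that for every real β > 0 the family indexed by Σ (k : ℕ), (Fin k → ℕ) with terms ∏_{i ∈ Fin k} e^{-2πβ(n + f i)} is summable if and only if β > β₀. -/

import Mathlib

open Real


private lemma pi_summable_tsum (a : ℕ → ℝ) (ha : Summable a) (ha0 : ∀ j, 0 ≤ a j) :
    ∀ k : ℕ, Summable (fun f : Fin k → ℕ => ∏ i, a (f i)) ∧
      (∑' f : Fin k → ℕ, ∏ i, a (f i)) = (∑' j, a j) ^ k := by
  intro k
  induction k with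
  | zero =>
    exact ⟨Summable.of_finite, by simp⟩
  | succ k ih =>
    obtain ⟨hs, ht⟩ := ih
    have hb0 : ∀ f : Fin k → ℕ, 0 ≤ ∏ i, a (f i) :=
      fun f => Finset.prod_nonneg fun i _ => ha0 _
    have key : ∀ p : ℕ × (Fin k → ℕ),
        ((fun f : Fin (k+1) → ℕ => ∏ i, a (f i)) ∘ (Fin.consEquiv (fun _ => ℕ))) p
          = a p.1 * ∏ i, a (p.2 i) := by
      intro p
      simp [Fin.prod_univ_succ]
    have hsum2 : Summable (fun p : ℕ × (Fin k → ℕ) => a p.1 * ∏ i, a (p.2 i)) :=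
      Summable.mul_of_nonneg (f := a) (g := fun f : Fin k → ℕ => ∏ i, a (f i))
        ha hs ha0 hb0
    have hsum : Summable (fun f : Fin (k+1) → ℕ => ∏ i, a (f i)) :=
      (Fin.consEquiv (fun _ => ℕ)).summable_iff.mp (hsum2.congr fun p => (key p).symm)
    refine ⟨hsum, ?_⟩
    rw [← (Fin.consEquiv (fun _ => ℕ)).tsum_eq (fun f : Fin (k+1) → ℕ => ∏ i, a (f i))]
    calc (∑' p : ℕ × (Fin k → ℕ), ∏ i, a ((Fin.consEquiv (fun _ => ℕ)) p i))
        = ∑' p : ℕ × (Fin k → ℕ), a p.1 * ∏ i, a (p.2 i) := tsum_congr key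
      _ = ∑' x : ℕ, ∑' f : Fin k → ℕ, a x * ∏ i, a (f i) :=
            Summable.tsum_prod' hsum2 (fun x => hs.mul_left (a x))
      _ = ∑' x : ℕ, a x * ∑' f : Fin k → ℕ, ∏ i, a (f i) :=
            tsum_congr fun x => tsum_mul_left
      _ = (∑' j, a j) ^ (k+1) := by rw [ht, tsum_mul_right, pow_succ, mul_comm]

/-- summability criterion for fixed `n`, `β`. -/
private lemma summable_iff_lt_one (n : ℕ) (β : ℝ) (hβ : 0 < β) :
    (Summable (fun p : Σ k : ℕ, Fin k → ℕ =>
        ∏ i : Fin p.1, Real.exp (-(2 * π * β) * ((n : ℝ) + (p.2 i : ℝ))))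
      ↔ exp (-(2 * π * β) * n) + exp (-(2 * π * β)) < 1) := by
  set c : ℝ := 2 * π * β with hc
  have hcpos : 0 < c := by positivity
  set a : ℕ → ℝ := fun j => exp (-c * ((n : ℝ) + j)) with haa
  have ha0 : ∀ j, 0 ≤ a j := fun j => (exp_pos _).le
  have aeq : ∀ j, a j = exp (-c * n) * exp (-c) ^ j := by
    intro j
    show exp (-c * ((n : ℝ) + j)) = exp (-c * n) * exp (-c) ^ j
    rw [show -c * ((n : ℝ) + j) = -c * n + (j : ℝ) * (-c) by ring, Real.exp_add,
      Real.exp_nat_mul]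
  have hq1 : exp (-c) < 1 := exp_lt_one_iff.mpr (by linarith)
  have h1q : 0 < 1 - exp (-c) := by linarith
  have ha : Summable a := by
    refine Summable.congr ?_ (fun j => (aeq j).symm)
    exact (summable_geometric_of_lt_one (exp_pos _).le hq1).mul_left _
  have hR : (∑' j, a j) = exp (-c * n) * (1 - exp (-c))⁻¹ := by
    rw [tsum_congr aeq, tsum_mul_left, tsum_geometric_of_lt_one (exp_pos _).le hq1]
  have hR0 : 0 ≤ ∑' j, a j := tsum_nonneg ha0
  have hpos : ∀ p : Σ k : ℕ, Fin k → ℕ,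
      0 ≤ ∏ i : Fin p.1, Real.exp (-c * ((n : ℝ) + (p.2 i : ℝ))) :=
    fun p => Finset.prod_nonneg fun i _ => (exp_pos _).le
  rw [summable_sigma_of_nonneg hpos]
  have hfib : ∀ k : ℕ, (∑' f : Fin k → ℕ,
      ∏ i : Fin k, Real.exp (-c * ((n : ℝ) + (f i : ℝ)))) = (∑' j, a j) ^ k :=
    fun k => (pi_summable_tsum a ha ha0 k).2
  constructor
  · rintro ⟨-, h2⟩
    have h2' : Summable (fun k : ℕ => (∑' j, a j) ^ k) :=
      h2.congr fun k => (hfib k)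
    have := summable_geometric_iff_norm_lt_one.mp h2'
    rw [Real.norm_eq_abs, abs_of_nonneg hR0, hR, ← div_eq_mul_inv, div_lt_one h1q] at this
    linarith
  · intro h
    have hRlt : (∑' j, a j) < 1 := by
      rw [hR, ← div_eq_mul_inv, div_lt_one h1q]; linarith
    refine ⟨fun k => (pi_summable_tsum a ha ha0 k).1, ?_⟩
    refine Summable.congr ?_ fun k => (hfib k).symm
    exact summable_geometric_of_lt_one hR0 hRlt

/-- For every `T > 0` there are `n ≥ 1` and `0 < β₀ < T` such that for every
`β > 0` the Fock-space trace family over `Σ k, (Fin k → ℕ)` with terms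
`∏_i e^{-2πβ(n + f i)}` is summable iff `β > β₀`. -/
theorem exists_net_with_large_maximal_temperature (T : ℝ) (hT : 0 < T) :
    ∃ (n : ℕ), 1 ≤ n ∧ ∃ β₀ : ℝ, 0 < β₀ ∧ β₀ < T ∧
      ∀ β : ℝ, 0 < β →
        (Summable (fun p : Σ k : ℕ, Fin k → ℕ =>
            ∏ i : Fin p.1, Real.exp (-(2 * π * β) * ((n : ℝ) + (p.2 i : ℝ))))
          ↔ β₀ < β) := by
  -- choose `n`
  set q : ℝ := exp (-(π * T)) with hqdef
  have hq0 : 0 < q := exp_pos _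
  have hq1 : q < 1 := exp_lt_one_iff.mpr (by nlinarith [pi_pos])
  obtain ⟨m, hm⟩ := exists_pow_lt_of_lt_one (x := 1 - q) (by linarith) hq1
  set n : ℕ := m + 1 with hndef
  have hn1 : 1 ≤ n := Nat.le_add_left 1 m
  have hqn : q ^ n < 1 - q :=
    lt_of_le_of_lt (pow_le_pow_of_le_one hq0.le hq1.le (Nat.le_succ m)) hm
  -- the partition-function bound `G`
  set G : ℝ → ℝ := fun β => exp (-(2 * π * β) * n) + exp (-(2 * π * β)) with hGdef
  have hGanti : StrictAnti G := by
    intro x y hxy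
    have hn0 : (1 : ℝ) ≤ (n : ℝ) := by exact_mod_cast hn1
    exact add_lt_add
      (exp_lt_exp.mpr (by nlinarith [mul_pos (mul_pos two_pos pi_pos) (sub_pos.mpr hxy)]))
      (exp_lt_exp.mpr (by nlinarith [pi_pos]))
  have hG0 : G 0 = 2 := by norm_num [hGdef]
  have hGT2 : G (T / 2) < 1 := by
    have : G (T / 2) = q ^ n + q := by
      show exp (-(2 * π * (T / 2)) * n) + exp (-(2 * π * (T / 2))) = q ^ n + q
      rw [show -(2 * π * (T / 2)) * (n : ℝ) = (n : ℝ) * -(π * T) by ring,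
        show -(2 * π * (T / 2)) = -(π * T) by ring, Real.exp_nat_mul, hqdef]
    rw [this]; linarith
  -- intermediate value theorem
  have hGc : ContinuousOn G (Set.Icc 0 (T / 2)) := by
    apply Continuous.continuousOn
    fun_prop
  have hmem : (1 : ℝ) ∈ Set.Icc (G (T / 2)) (G 0) := ⟨hGT2.le, by rw [hG0]; norm_num⟩
  obtain ⟨β₀, hβ₀mem, hβ₀eq⟩ :=
    intermediate_value_Icc' (by linarith : (0 : ℝ) ≤ T / 2) hGc hmem
  have hβ₀pos : 0 < β₀ := by
    rcases lt_or_eq_of_le hβ₀mem.1 with h | h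
    · exact h
    · exfalso; rw [← h] at hβ₀eq; rw [hG0] at hβ₀eq; norm_num at hβ₀eq
  refine ⟨n, hn1, β₀, hβ₀pos, by linarith [hβ₀mem.2], ?_⟩
  intro β hβ
  rw [summable_iff_lt_one n β hβ]
  constructor
  · intro h
    have : G β < G β₀ := by rw [hβ₀eq]; exact h
    exact hGanti.lt_iff_gt.mp this
  · intro h
    have : G β < G β₀ := hGanti h
    rw [hβ₀eq] at this; exact this
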